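/- The pricing formula for a foreign (k2-denominated) ZCB collateralized in currency k0 under the domestic measure, 𝒳^{k0,k2}_t B^{k2,k0}(t,T) = B^{c,k0}_t E^{ℚ^{k0}}[ 𝒳^{k0,k2}_T / B^{c,k0}_T | 𝒢_t ], transforms under the change to the foreign spot measure ℚ^{k2} with density (B^{k2}_T 𝒳^{k0,k2}_T / B^{k0}_T)·(B^{k0}_0/(B^{k2}_0 𝒳^{k0,k2}_0)) into B^{k2,k0}(t,T) = B^{c,k2,k0}_t E^{ℚ^{k2}}[ 1 / B^{c,k2,k0}_T | 𝒢_t ], where B^{c,k2,k0}_t = exp(∫_0^t (r^{c,k2}_s + q^{k2,k0}_s) ds). -/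

import Mathlib

open MeasureTheory
open scoped ENNReal NNReal

/-- If a nonnegative `m`-measurable `φ` is such that `φ * μ[g|m]` is integrable, and `g ≥ 0`
is integrable, then `φ * g` is integrable. -/
lemma aux_integrable_mul {Ω : Type*} {m m0 : MeasurableSpace Ω} (hm : m ≤ m0)
    {μ : Measure Ω} [IsFiniteMeasure μ] {φ g : Ω → ℝ}
    (hφm : StronglyMeasurable[m] φ) (hφ0 : 0 ≤ᵐ[μ] φ)
    (hg : Integrable g μ) (hg0 : 0 ≤ᵐ[μ] g)
    (hprod : Integrable (fun ω => φ ω * (μ[g|m]) ω) μ) :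
    Integrable (fun ω => φ ω * g ω) μ := by
  set φn : ℕ → Ω → ℝ := fun n ω => min (max (φ ω) 0) n with hφn
  have hφnSM : ∀ n, StronglyMeasurable[m] (φn n) := fun n =>
    Continuous.comp_stronglyMeasurable
      ((continuous_id.max continuous_const).min continuous_const) hφm
  have hφn_nonneg : ∀ n ω, 0 ≤ φn n ω := fun n ω =>
    le_min (le_max_right _ _) (Nat.cast_nonneg n)
  have hφn_le : ∀ n ω, φn n ω ≤ (n : ℝ) := fun n ω => min_le_right _ _
  have hφn_int : ∀ n, Integrable (fun ω => φn n ω * g ω) μ := by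
    intro n
    refine Integrable.mono' (hg.norm.const_mul (n : ℝ))
      ((((hφnSM n).mono hm).aestronglyMeasurable).mul hg.1) ?_
    filter_upwards with ω
    rw [norm_mul]
    exact mul_le_mul_of_nonneg_right
      (by rw [Real.norm_eq_abs, abs_of_nonneg (hφn_nonneg n ω)]; exact hφn_le n ω)
      (norm_nonneg _)
  have hcond0 : 0 ≤ᵐ[μ] μ[g|m] := condExp_nonneg hg0
  have h1 : ∀ n, ∫ ω, φn n ω * g ω ∂μ ≤ ∫ ω, φ ω * (μ[g|m]) ω ∂μ := by
    intro n
    have e1 : μ[(φn n) * g|m] =ᵐ[μ] (φn n) * μ[g|m] :=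
      condExp_mul_of_stronglyMeasurable_left (hφnSM n) (hφn_int n) hg
    have int1 : Integrable (fun ω => φn n ω * (μ[g|m]) ω) μ := by
      refine Integrable.mono' ((integrable_condExp (f := g) (m := m)).norm.const_mul (n : ℝ))
        ((((hφnSM n).mono hm).aestronglyMeasurable).mul (integrable_condExp (f := g) (m := m)).1) ?_
      filter_upwards with ω
      rw [norm_mul]
      exact mul_le_mul_of_nonneg_right
        (by rw [Real.norm_eq_abs, abs_of_nonneg (hφn_nonneg n ω)]; exact hφn_le n ω)
        (norm_nonneg _)
    calc ∫ ω, φn n ω * g ω ∂μ = ∫ ω, (μ[(φn n) * g|m]) ω ∂μ :=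
          (integral_condExp hm).symm
      _ = ∫ ω, φn n ω * (μ[g|m]) ω ∂μ := integral_congr_ae e1
      _ ≤ ∫ ω, φ ω * (μ[g|m]) ω ∂μ := by
          refine integral_mono_ae int1 hprod ?_
          filter_upwards [hφ0, hcond0] with ω hω hcω
          exact mul_le_mul_of_nonneg_right
            (le_trans inf_le_left (sup_le le_rfl hω)) hcω
  have hae : AEStronglyMeasurable (fun ω => φ ω * g ω) μ :=
    (((hφm.mono hm).aestronglyMeasurable).mul hg.1)
  refine ⟨hae, ?_⟩
  have hsup : ∀ᵐ ω ∂μ, (⨆ n, ENNReal.ofReal (φn n ω * g ω)) = ENNReal.ofReal (φ ω * g ω) := by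
    filter_upwards [hφ0, hg0] with ω hφω hgω
    refine le_antisymm (iSup_le fun n => ENNReal.ofReal_le_ofReal
      (mul_le_mul_of_nonneg_right (le_trans inf_le_left (sup_le le_rfl hφω)) hgω)) ?_
    have heq : φn ⌈φ ω⌉₊ ω = φ ω := by
      have h1 : φ ω ⊔ 0 = φ ω := sup_eq_left.2 hφω
      simp only [hφn]
      rw [h1, inf_eq_left.2 (Nat.le_ceil _)]
    exact le_iSup_of_le ⌈φ ω⌉₊ (by rw [heq])
  have hmono : ∀ᵐ ω ∂μ, Monotone fun n => ENNReal.ofReal (φn n ω * g ω) := by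
    filter_upwards [hg0] with ω hgω
    intro a b hab
    exact ENNReal.ofReal_le_ofReal (mul_le_mul_of_nonneg_right
      (min_le_min le_rfl (Nat.cast_le.mpr hab)) hgω)
  have hmeas : ∀ n, AEMeasurable (fun ω => ENNReal.ofReal (φn n ω * g ω)) μ := fun n =>
    ENNReal.measurable_ofReal.comp_aemeasurable
      ((((hφnSM n).mono hm).measurable.aemeasurable).mul hg.1.aemeasurable)
  have hlim : ∫⁻ ω, ENNReal.ofReal (φ ω * g ω) ∂μ
      = ⨆ n, ∫⁻ ω, ENNReal.ofReal (φn n ω * g ω) ∂μ := by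
    rw [← lintegral_iSup' hmeas hmono]
    exact lintegral_congr_ae (hsup.mono fun ω h => h.symm)
  have hbound : ∀ n, ∫⁻ ω, ENNReal.ofReal (φn n ω * g ω) ∂μ
      ≤ ENNReal.ofReal (∫ ω, φ ω * (μ[g|m]) ω ∂μ) := by
    intro n
    rw [← ofReal_integral_eq_lintegral_ofReal (hφn_int n)
      (by filter_upwards [hg0] with ω hgω; exact mul_nonneg (hφn_nonneg n ω) hgω)]
    exact ENNReal.ofReal_le_ofReal (h1 n)
  have hfin : ∫⁻ ω, ENNReal.ofReal (φ ω * g ω) ∂μ < ⊤ := by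
    rw [hlim]
    exact lt_of_le_of_lt (iSup_le hbound) ENNReal.ofReal_lt_top
  have : HasFiniteIntegral (fun ω => φ ω * g ω) μ := by
    rw [hasFiniteIntegral_iff_norm]
    calc ∫⁻ ω, ENNReal.ofReal ‖φ ω * g ω‖ ∂μ
        = ∫⁻ ω, ENNReal.ofReal (φ ω * g ω) ∂μ := by
          refine lintegral_congr_ae ?_
          filter_upwards [hφ0, hg0] with ω hφω hgω
          rw [Real.norm_eq_abs, abs_of_nonneg (mul_nonneg hφω hgω)]
      _ < ⊤ := hfin
  exact this

/-- Abstract Bayes rule for conditional expectations under a change of measure with a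
positive integrable density. -/
lemma bayes_aux {Ω : Type*} {m m0 : MeasurableSpace Ω} (hm : m ≤ m0)
    (μ : Measure Ω) [IsProbabilityMeasure μ] {g f F d : Ω → ℝ}
    (hgint : Integrable g μ) (hg0 : ∀ ω, 0 < g ω)
    (hF0 : ∀ ω, 0 ≤ F ω)
    (hfg : ∀ ω, f ω * g ω = F ω) (hFint : Integrable F μ)
    (hfν : Integrable f (μ.withDensity fun ω => ENNReal.ofReal (g ω)))
    (hd : μ[g|m] =ᵐ[μ] d) (hd0 : ∀ ω, 0 < d ω) :
    (fun ω => (μ[F|m]) ω / (μ[g|m]) ω)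
      =ᵐ[μ] (μ.withDensity fun ω => ENNReal.ofReal (g ω))[f|m] := by
  set ν : Measure Ω := μ.withDensity fun ω => ENNReal.ofReal (g ω) with hν
  have hgae : AEMeasurable g μ := hgint.1.aemeasurable
  have hgnn : AEMeasurable (fun ω => (g ω).toNNReal) μ := hgae.real_toNNReal
  have hνeq : ν = μ.withDensity fun ω => ((g ω).toNNReal : ℝ≥0∞) := rfl
  set φ : Ω → ℝ := fun ω => (μ[F|m]) ω / (μ[g|m]) ω with hφ
  have hφSM : StronglyMeasurable[m] φ :=
    (stronglyMeasurable_condExp.measurable.div stronglyMeasurable_condExp.measurable).stronglyMeasurable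
  have hcondg0 : 0 ≤ᵐ[μ] μ[g|m] := condExp_nonneg (Filter.Eventually.of_forall fun ω => (hg0 ω).le)
  have hcondF0 : 0 ≤ᵐ[μ] μ[F|m] := condExp_nonneg (Filter.Eventually.of_forall hF0)
  have hφ0 : 0 ≤ᵐ[μ] φ := by
    filter_upwards [hcondg0, hcondF0] with ω h1 h2
    exact div_nonneg h2 h1
  have hprod_eq : (fun ω => φ ω * (μ[g|m]) ω) =ᵐ[μ] μ[F|m] := by
    filter_upwards [hd] with ω hω
    have hne : (μ[g|m]) ω ≠ 0 := by rw [hω]; exact (hd0 ω).ne'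
    simp only [hφ]
    exact div_mul_cancel₀ _ hne
  have hprod_int : Integrable (fun ω => φ ω * (μ[g|m]) ω) μ :=
    integrable_condExp.congr hprod_eq.symm
  have hφg_int : Integrable (fun ω => φ ω * g ω) μ :=
    aux_integrable_mul hm hφSM hφ0 hgint
      (Filter.Eventually.of_forall fun ω => (hg0 ω).le) hprod_int
  have hmul : μ[φ * g|m] =ᵐ[μ] φ * μ[g|m] :=
    condExp_mul_of_stronglyMeasurable_left hφSM hφg_int hgint
  have hφν_int : Integrable φ ν := by
    rw [hνeq, integrable_withDensity_iff_integrable_smul₀ hgnn]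
    refine hφg_int.congr (Filter.Eventually.of_forall fun ω => ?_)
    simp only [NNReal.smul_def, smul_eq_mul]; rw [Real.coe_toNNReal _ (hg0 ω).le, mul_comm]
  haveI : IsFiniteMeasure ν := by
    constructor
    rw [hν, withDensity_apply _ MeasurableSet.univ, Measure.restrict_univ]
    calc ∫⁻ ω, ENNReal.ofReal (g ω) ∂μ ≤ ∫⁻ ω, (‖g ω‖₊ : ℝ≥0∞) ∂μ :=
          lintegral_mono fun ω => Real.ofReal_le_enorm _
      _ < ⊤ := hgint.2
  have hkey : φ =ᵐ[ν] ν[f|m] := by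
    refine ae_eq_condExp_of_forall_setIntegral_eq hm hfν
      (fun s _ _ => hφν_int.integrableOn) (fun s hs _ => ?_) ⟨φ, hφSM, Filter.EventuallyEq.rfl⟩
    have hsm : MeasurableSet s := hm s hs
    calc ∫ ω in s, φ ω ∂ν = ∫ ω in s, ((g ω).toNNReal : ℝ) • φ ω ∂μ := by
          rw [hνeq]
          exact setIntegral_withDensity_eq_setIntegral_smul₀ hgnn.restrict φ hsm
      _ = ∫ ω in s, φ ω * g ω ∂μ := by
          refine integral_congr_ae (Filter.Eventually.of_forall fun ω => ?_)
          simp only [NNReal.smul_def, smul_eq_mul]; rw [Real.coe_toNNReal _ (hg0 ω).le, mul_comm]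
      _ = ∫ ω in s, (μ[φ * g|m]) ω ∂μ := (setIntegral_condExp hm hφg_int hs).symm
      _ = ∫ ω in s, (μ[F|m]) ω ∂μ := by
          refine setIntegral_congr_ae hsm ?_
          filter_upwards [hmul, hprod_eq] with ω h1 h2 _
          rw [h1]; exact h2
      _ = ∫ ω in s, F ω ∂μ := setIntegral_condExp hm hFint hs
      _ = ∫ ω in s, ((g ω).toNNReal : ℝ) • f ω ∂μ := by
          refine integral_congr_ae (Filter.Eventually.of_forall fun ω => ?_)
          simp only [NNReal.smul_def, smul_eq_mul]; rw [Real.coe_toNNReal _ (hg0 ω).le, mul_comm, hfg]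
      _ = ∫ ω in s, f ω ∂ν := by
          rw [hνeq]
          exact (setIntegral_withDensity_eq_setIntegral_smul₀ hgnn.restrict f hsm).symm
  have hac : μ ≪ ν := by
    rw [hν]
    exact withDensity_absolutelyContinuous'
      (ENNReal.measurable_ofReal.comp_aemeasurable hgae)
      (Filter.Eventually.of_forall fun ω => (ENNReal.ofReal_pos.2 (hg0 ω)).ne')
  exact hac.ae_eq hkey


/-- The measure with density `g` with respect to `μ` (used to define the foreign spot
risk-neutral measure). -/
noncomputable def densMeasure {Ω : Type*} {m0 : MeasurableSpace Ω}
    (μ : Measure Ω) (g : Ω → ℝ) : Measure Ω :=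
  μ.withDensity fun ω => ENNReal.ofReal (g ω)

/-- The pricing formula for a foreign (`k2`-denominated) ZCB
collateralized in currency `k0` under the domestic measure,
`𝒳^{k0,k2}_t B^{k2,k0}(t,T) = B^{c,k0}_t E^{ℚ^{k0}}[𝒳^{k0,k2}_T / B^{c,k0}_T | 𝒢_t]`,
transforms under the change to the foreign spot measure `ℚ^{k2}` with density
`(B^{k2}_T 𝒳^{k0,k2}_T / B^{k0}_T)·(B^{k0}_0/(B^{k2}_0 𝒳^{k0,k2}_0))` into
`B^{k2,k0}(t,T) = B^{c,k2,k0}_t E^{ℚ^{k2}}[1/B^{c,k2,k0}_T | 𝒢_t]`, where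
`B^{c,k2,k0}_t = exp(∫_0^t (r^{c,k2}_s + q^{k2,k0}_s) ds)`. -/
theorem foreign_zcb_domestic_collateral_under_foreign_measure
    {Ω : Type*} {m0 : MeasurableSpace Ω} (μ : Measure Ω) [IsProbabilityMeasure μ]
    (𝔾 : Filtration ℝ m0) (T : ℝ) (hT : 0 ≤ T)
    (r0 r2 rc0 rc2 : ℝ → Ω → ℝ)
    (q20 : ℝ → Ω → ℝ)
    (hq20 : ∀ t ω, q20 t ω = (r2 t ω - rc2 t ω) - (r0 t ω - rc0 t ω))
    (B0 B2 Bc0 Bc20 : ℝ → Ω → ℝ)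
    (hB0 : ∀ t ω, B0 t ω = Real.exp (∫ s in (0:ℝ)..t, r0 s ω))
    (hB2 : ∀ t ω, B2 t ω = Real.exp (∫ s in (0:ℝ)..t, r2 s ω))
    (hBc0 : ∀ t ω, Bc0 t ω = Real.exp (∫ s in (0:ℝ)..t, rc0 s ω))
    (hBc20 : ∀ t ω, Bc20 t ω = Real.exp (∫ s in (0:ℝ)..t, (rc2 s ω + q20 s ω)))
    (hint : ∀ t ω, IntervalIntegrable (fun s => r0 s ω) volume 0 t ∧
        IntervalIntegrable (fun s => r2 s ω) volume 0 t ∧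
        IntervalIntegrable (fun s => rc0 s ω) volume 0 t ∧
        IntervalIntegrable (fun s => rc2 s ω) volume 0 t)
    (X : ℝ → Ω → ℝ) (hXpos : ∀ t ω, 0 < X t ω)
    (BZ : ℝ → ℝ → Ω → ℝ)                -- B^{k2,k0}(t,T)
    (hadX : ∀ t, StronglyMeasurable[𝔾 t] (X t))
    (hadBZ : ∀ t τ, StronglyMeasurable[𝔾 t] fun ω => BZ t τ ω)
    (hintX : Integrable (fun ω => X T ω / Bc0 T ω) μ)
    (hint20 : Integrable (fun ω => 1 / Bc20 T ω)
      (densMeasure μ fun ω => X T ω * B2 T ω / (B0 T ω * X 0 ω)))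
    -- domestic-measure pricing formula for the k0-collateralized k2-ZCB
    (hdom : ∀ t, 0 ≤ t → t ≤ T →
      (fun ω => X t ω * BZ t T ω) =ᵐ[μ]
        fun ω => Bc0 t ω * ((μ[fun ω' => X T ω' / Bc0 T ω' | 𝔾 t]) ω))
    -- 𝒳^{k0,k2} B^{k2}/B^{k0} is a true (ℚ^{k0},𝔾)-martingale defining the measure change
    (hmart : ∀ s t, 0 ≤ s → s ≤ t →
      μ[fun ω => X t ω * B2 t ω / (B0 t ω * X 0 ω) | 𝔾 s] =ᵐ[μ]
        fun ω => X s ω * B2 s ω / (B0 s ω * X 0 ω)) :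
    ∀ t, 0 ≤ t → t ≤ T →
      (fun ω => BZ t T ω) =ᵐ[μ]
        fun ω => Bc20 t ω *
          (((densMeasure μ fun ω' => X T ω' * B2 T ω' / (B0 T ω' * X 0 ω'))[fun ω' =>
              1 / Bc20 T ω' | 𝔾 t]) ω) := by
  intro t ht htT
  have hm : 𝔾 t ≤ m0 := 𝔾.le t
  have hB0pos : ∀ u ω, 0 < B0 u ω := fun u ω => (hB0 u ω) ▸ Real.exp_pos _
  have hB2pos : ∀ u ω, 0 < B2 u ω := fun u ω => (hB2 u ω) ▸ Real.exp_pos _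
  have hBc0pos : ∀ u ω, 0 < Bc0 u ω := fun u ω => (hBc0 u ω) ▸ Real.exp_pos _
  have hBc20pos : ∀ u ω, 0 < Bc20 u ω := fun u ω => (hBc20 u ω) ▸ Real.exp_pos _
  have hgpos : ∀ ω, 0 < X T ω * B2 T ω / (B0 T ω * X 0 ω) := fun ω =>
    div_pos (mul_pos (hXpos T ω) (hB2pos T ω)) (mul_pos (hB0pos T ω) (hXpos 0 ω))
  -- key multiplicative identity between the bank accounts
  have hBkey : ∀ u ω, Bc20 u ω * B0 u ω = B2 u ω * Bc0 u ω := by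
    intro u ω
    obtain ⟨h0, h2, hc0, hc2⟩ := hint u ω
    have hι : (fun s => rc2 s ω + q20 s ω) = fun s => r2 s ω - r0 s ω + rc0 s ω := by
      funext s; rw [hq20]; ring
    rw [hBc20, hB0, hB2, hBc0, ← Real.exp_add, ← Real.exp_add, hι,
      intervalIntegral.integral_add (h2.sub h0) hc0, intervalIntegral.integral_sub h2 h0]
    ring_nf
  -- integrability of the density
  have hgint : Integrable (fun ω => X T ω * B2 T ω / (B0 T ω * X 0 ω)) μ := by
    by_contra hcon
    have h0 := hmart 0 T le_rfl hT
    rw [condExp_of_not_integrable hcon] at h0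
    haveI : (MeasureTheory.ae μ).NeBot := ae_neBot.mpr (IsProbabilityMeasure.ne_zero μ)
    obtain ⟨ω, hω⟩ := h0.exists
    have h1 : X 0 ω * B2 0 ω / (B0 0 ω * X 0 ω) = 1 := by
      rw [hB2, hB0]
      simp only [intervalIntegral.integral_same, Real.exp_zero, mul_one, one_mul]
      exact div_self (hXpos 0 ω).ne'
    rw [Pi.zero_apply] at hω
    exact zero_ne_one (hω.trans h1)
  -- pointwise: (1/Bc20_T) * g = F
  have hfg : ∀ ω, (1 / Bc20 T ω) * (X T ω * B2 T ω / (B0 T ω * X 0 ω))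
      = X T ω / (Bc0 T ω * X 0 ω) := by
    intro ω
    have h := hBkey T ω
    field_simp [(hBc20pos T ω).ne', (hB0pos T ω).ne', (hBc0pos T ω).ne',
      (hXpos 0 ω).ne', (hB2pos T ω).ne']
    linear_combination (-(X T ω)) * h
  have hF0 : ∀ ω, 0 ≤ X T ω / (Bc0 T ω * X 0 ω) := fun ω =>
    (div_pos (hXpos T ω) (mul_pos (hBc0pos T ω) (hXpos 0 ω))).le
  -- integrability of F under μ (from hint20)
  have hgnn : AEMeasurable (fun ω => (X T ω * B2 T ω / (B0 T ω * X 0 ω)).toNNReal) μ :=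
    hgint.1.aemeasurable.real_toNNReal
  have hFint : Integrable (fun ω => X T ω / (Bc0 T ω * X 0 ω)) μ := by
    have h := hint20
    rw [densMeasure] at h
    rw [show (fun ω => ENNReal.ofReal (X T ω * B2 T ω / (B0 T ω * X 0 ω)))
        = fun ω => ((X T ω * B2 T ω / (B0 T ω * X 0 ω)).toNNReal : ℝ≥0∞) from rfl,
      integrable_withDensity_iff_integrable_smul₀ hgnn] at h
    refine h.congr (Filter.Eventually.of_forall fun ω => ?_)
    simp only [NNReal.smul_def, smul_eq_mul]
    rw [Real.coe_toNNReal _ (hgpos ω).le, mul_comm, hfg]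
  -- Bayes
  have hbayes := bayes_aux hm μ hgint hgpos hF0 hfg hFint
    (by rw [densMeasure] at hint20; exact hint20)
    (hmart t T ht htT)
    (fun ω => div_pos (mul_pos (hXpos t ω) (hB2pos t ω)) (mul_pos (hB0pos t ω) (hXpos 0 ω)))
  -- conditional expectation of F
  have hXinv : StronglyMeasurable[𝔾 t] fun ω => (X 0 ω)⁻¹ :=
    (((hadX 0).mono (𝔾.mono ht)).measurable.inv).stronglyMeasurable
  have hFe : (fun ω => X T ω / (Bc0 T ω * X 0 ω))
      = (fun ω => (X 0 ω)⁻¹) * fun ω => X T ω / Bc0 T ω := by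
    funext ω
    simp only [Pi.mul_apply]
    rw [inv_mul_eq_div, div_div]
  have hcondF : μ[fun ω => X T ω / (Bc0 T ω * X 0 ω)|𝔾 t]
      =ᵐ[μ] (fun ω => (X 0 ω)⁻¹) * μ[fun ω => X T ω / Bc0 T ω|𝔾 t] := by
    rw [hFe]
    exact condExp_mul_of_stronglyMeasurable_left hXinv (hFe ▸ hFint) hintX
  -- conclude
  simp only [densMeasure]
  filter_upwards [hbayes, hcondF, hmart t T ht htT, hdom t ht htT] with ω h1 h2 h3 h4
  have h5 : (μ[fun ω' => X T ω' / Bc0 T ω'|𝔾 t]) ω = X t ω * BZ t T ω / Bc0 t ω := by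
    rw [eq_div_iff (hBc0pos t ω).ne']
    linarith [h4]
  have h6 : ((μ.withDensity fun ω' => ENNReal.ofReal
      (X T ω' * B2 T ω' / (B0 T ω' * X 0 ω')))[fun ω' => 1 / Bc20 T ω'|𝔾 t]) ω
      = (μ[fun ω' => X T ω' / (Bc0 T ω' * X 0 ω')|𝔾 t]) ω
        / (μ[fun ω' => X T ω' * B2 T ω' / (B0 T ω' * X 0 ω')|𝔾 t]) ω := h1.symm
  rw [h6, h2, h3]
  simp only [Pi.mul_apply]
  rw [h5]
  have hk := hBkey t ω
  field_simp [(hBc20pos t ω).ne', (hB0pos t ω).ne', (hBc0pos t ω).ne',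
    (hXpos 0 ω).ne', (hXpos t ω).ne', (hB2pos t ω).ne']
  linear_combination (-(BZ t T ω)) * hk
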